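/- Let d be a K-quasi-metric on X, let (x_n) be a sequence, and let y, z and y', z' be two good pairs for (x_n) (i.e., each pair consists of two distinct finite points with d(x_n,·) not converging to 0 for either point). If d(x_n,x) is bounded for all finite x and d(x_n,x_m) → 0 as n,m → ∞, then (d(x_n,x_m)·d(y',z'))/(d(x_n,y')·d(x_m,z')) → 0 as n,m → ∞. -/

import Mathlib

open Filter ENNReal

private lemma aux_lower {X : Type*} (d : X → X → ℝ≥0∞) (K : ℝ≥0∞)
    (hKfin : K ≠ ⊤)
    (hquasi : ∀ x y z, d x z ≤ K * max (d x y) (d y z))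
    (x : ℕ → X) (y' : X)
    (hy' : ¬ Tendsto (fun n => d (x n) y') atTop (nhds 0))
    (hcauchy : Tendsto (fun p : ℕ × ℕ => d (x p.1) (x p.2))
      (atTop ×ˢ atTop) (nhds 0)) :
    ∃ δ : ℝ≥0∞, 0 < δ ∧ ∀ᶠ n in atTop, δ ≤ d (x n) y' := by
  rw [ENNReal.tendsto_nhds_zero] at hy'
  push_neg at hy'
  obtain ⟨ε, hε, hfreq⟩ := hy'
  have hfreq' : ∃ᶠ n in atTop, min ε 1 < d (x n) y' := by
    refine hfreq.mono fun n hn => ?_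
    exact lt_of_le_of_lt (min_le_left _ _) hn
  set ε₀ : ℝ≥0∞ := min ε 1 with hε₀def
  have hε₀pos : 0 < ε₀ := lt_min hε zero_lt_one
  have hε₀top : ε₀ ≠ ⊤ := ne_top_of_le_ne_top one_ne_top (min_le_right _ _)
  set δ : ℝ≥0∞ := ε₀ / 2 / K with hδdef
  have hδpos : 0 < δ := by
    apply ENNReal.div_pos _ hKfin
    exact (ENNReal.div_pos hε₀pos.ne' ENNReal.ofNat_ne_top).ne'
  refine ⟨δ, hδpos, ?_⟩
  have hc : ∀ᶠ p : ℕ × ℕ in atTop ×ˢ atTop, d (x p.1) (x p.2) < δ :=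
    hcauchy.eventually (Filter.Tendsto.eventually_lt_const hδpos tendsto_id)
  rw [prod_atTop_atTop_eq, eventually_atTop] at hc
  obtain ⟨⟨N₁, N₂⟩, hN⟩ := hc
  filter_upwards [eventually_ge_atTop (max N₁ N₂)] with n hn
  by_contra h
  push_neg at h
  obtain ⟨m, hm, hmε⟩ := (frequently_atTop.mp hfreq') (max N₁ N₂)
  have hmn : d (x m) (x n) < δ :=
    hN (m, n) ⟨le_trans (le_max_left _ _) hm, le_trans (le_max_right _ _) hn⟩
  have hq : d (x m) y' ≤ K * max (d (x m) (x n)) (d (x n) y') := hquasi _ _ _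
  have hle : d (x m) y' ≤ K * δ := by
    refine hq.trans (mul_le_mul_right ?_ K)
    exact max_le hmn.le h.le
  have hKδ : K * δ ≤ ε₀ / 2 := ENNReal.mul_div_le
  have hlt : d (x m) y' < ε₀ :=
    lt_of_le_of_lt (hle.trans hKδ) (ENNReal.half_lt_self hε₀pos.ne' hε₀top)
  exact absurd hmε (not_lt.mpr hlt.le)

/-- Case 1 of the good-pair independence lemma: for a bounded
sequence with d(x_n,x_m) → 0, the c-component ratio tends to 0 for every good
pair (y',z'). -/
theorem mobius_cauchy_good_pair_bounded {X : Type*} (d : X → X → ℝ≥0∞) (K : ℝ≥0∞)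
    (hK : 1 ≤ K) (hKfin : K ≠ ⊤)
    (hsymm : ∀ x y, d x y = d y x)
    (hzero : ∀ x y, d x y = 0 ↔ x = y)
    (hquasi : ∀ x y z, d x z ≤ K * max (d x y) (d y z))
    (ω : X)
    (hω : ∀ x, x ≠ ω → d x ω = ⊤)
    (hfin : ∀ x y, x ≠ ω → y ≠ ω → d x y ≠ ⊤)
    (x : ℕ → X)
    (y z : X) (hyz : y ≠ z) (hyω : y ≠ ω) (hzω : z ≠ ω)
    (hy : ¬ Tendsto (fun n => d (x n) y) atTop (nhds 0))
    (hz : ¬ Tendsto (fun n => d (x n) z) atTop (nhds 0))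
    (y' z' : X) (hyz' : y' ≠ z') (hyω' : y' ≠ ω) (hzω' : z' ≠ ω)
    (hy' : ¬ Tendsto (fun n => d (x n) y') atTop (nhds 0))
    (hz' : ¬ Tendsto (fun n => d (x n) z') atTop (nhds 0))
    (hbdd : ∀ x' : X, x' ≠ ω → ∃ B : ℝ≥0∞, B ≠ ⊤ ∧ ∀ n, d (x n) x' ≤ B)
    (hcauchy : Tendsto (fun p : ℕ × ℕ => d (x p.1) (x p.2))
      (atTop ×ˢ atTop) (nhds 0)) :
    Tendsto
      (fun p : ℕ × ℕ => d (x p.1) (x p.2) * d y' z' / (d (x p.1) y' * d (x p.2) z'))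
      (atTop ×ˢ atTop) (nhds 0) := by
  obtain ⟨δ₁, hδ₁, he₁⟩ := aux_lower d K hKfin hquasi x y' hy' hcauchy
  obtain ⟨δ₂, hδ₂, he₂⟩ := aux_lower d K hKfin hquasi x z' hz' hcauchy
  have hC : d y' z' ≠ ⊤ := hfin _ _ hyω' hzω'
  set M : ℝ≥0∞ := d y' z' / (δ₁ * δ₂) with hM
  have hMtop : M ≠ ⊤ :=
    (ENNReal.div_lt_top hC (ENNReal.mul_pos hδ₁.ne' hδ₂.ne').ne').ne
  have hbound : ∀ᶠ p : ℕ × ℕ in atTop ×ˢ atTop,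
      d (x p.1) (x p.2) * d y' z' / (d (x p.1) y' * d (x p.2) z')
        ≤ d (x p.1) (x p.2) * M := by
    filter_upwards [he₁.prod_inl atTop, he₂.prod_inr atTop] with p h1 h2
    calc d (x p.1) (x p.2) * d y' z' / (d (x p.1) y' * d (x p.2) z')
        ≤ d (x p.1) (x p.2) * d y' z' / (δ₁ * δ₂) :=
          ENNReal.div_le_div_left (mul_le_mul' h1 h2) _
      _ = d (x p.1) (x p.2) * M := by rw [hM, mul_div_assoc]
  have hmul : Tendsto (fun p : ℕ × ℕ => d (x p.1) (x p.2) * M)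
      (atTop ×ˢ atTop) (nhds 0) := by
    have := ENNReal.Tendsto.mul_const hcauchy (Or.inr hMtop)
    simpa using this
  exact tendsto_of_tendsto_of_tendsto_of_le_of_le' tendsto_const_nhds hmul
    (Eventually.of_forall fun _ => zero_le) hbound
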